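/- Let f(x) = Σ_{i≥0} aᵢxⁱ be a power series with Σᵢ|aᵢ| < ∞ and such that (log|aᵢ|)/(i·log i) → −∞ as i → ∞. Then the set of nonempty compact K ⊆ [0,1] for which the Hausdorff dimension of f(K) = Σᵢ aᵢ·K^{⊙i} is positive is meager in 𝒦([0,1]). -/

import Mathlib

open Pointwise

/-- The space of nonempty compact subsets of `[0,1]`, with the Hausdorff metric topology. -/
def KIcc : Type := {K : TopologicalSpace.NonemptyCompacts ℝ // (K : Set ℝ) ⊆ Set.Icc 0 1}

instance : TopologicalSpace KIcc := instTopologicalSpaceSubtype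

namespace MeagerDim

open Set Metric Filter Finset TopologicalSpace MeasureTheory
open scoped NNReal ENNReal

noncomputable section

variable (a : ℕ → ℝ)

/-- total absolute sum -/
def Atot : ℝ := ∑' i, |a i|

/-- tail sums -/
def tail (M : ℕ) : ℝ := ∑' j, |a (M + j)|

open scoped Classical in
/-- The cut-off `M`: beyond it, coefficients are at most `i^{-n² i}`. -/
def Mof (n : ℕ) : ℕ :=
  if h : ∃ m, 3 ≤ m ∧ n ≤ m ∧ ∀ i, m ≤ i → |a i| ≤ ((i : ℝ) ^ (n ^ 2 * i))⁻¹ then h.choose else 3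

/-- precision for the `n`-th approximation -/
def phi (n : ℕ) : ℝ := ((Mof a n : ℝ) ^ ((n ^ 2 + 3) * Mof a n))⁻¹ / (Atot a + 1)

/-- partial Minkowski sums -/
def Sset (K : Set ℝ) (N : ℕ) : Set ℝ := ∑ i ∈ Finset.range N, a i • (K ^ i)

/-- `K` is well approximated, at precision `phi a n`, by a set of at most `n` points. -/
def Good (n : ℕ) (K : Set ℝ) : Prop :=
  ∃ P : Finset ℝ, P.Nonempty ∧ ↑P ⊆ Set.Icc (0:ℝ) 1 ∧ P.card ≤ n ∧
    Metric.hausdorffDist K ↑P ≤ phi a n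

/-- centers covering `K ^ i` -/
def Cfin (P : Finset ℝ) (i : ℕ) : Finset ℝ :=
  Finset.image (fun e : ↑P → Fin (i + 1) => ∏ p : ↑P, (p : ℝ) ^ (e p : ℕ)) Finset.univ

end

section Lemmas

variable {a : ℕ → ℝ} {K : Set ℝ}

lemma pow_subset_Icc (hK : K ⊆ Set.Icc 0 1) (i : ℕ) : K ^ i ⊆ Set.Icc (0:ℝ) 1 := by
  induction i with
  | zero => simp [Set.mem_Icc]
  | succ i ih =>
    rw [pow_succ]
    rintro x ⟨y, hy, z, hz, rfl⟩
    have h1 := ih hy; have h2 := hK hz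
    exact ⟨mul_nonneg h1.1 h2.1, mul_le_one₀ h1.2 h2.1 h2.2⟩

lemma abs_le_one_of_Icc {x : ℝ} (h : x ∈ Set.Icc (0:ℝ) 1) : |x| ≤ 1 := by
  rw [abs_of_nonneg h.1]; exact h.2

lemma Atot_nonneg : 0 ≤ Atot a := tsum_nonneg fun i => abs_nonneg _

lemma abs_le_Atot (hsum : Summable fun i => |a i|) (i : ℕ) : |a i| ≤ Atot a :=
  Summable.le_tsum hsum i fun j _ => abs_nonneg _

lemma tail_nonneg (M : ℕ) : 0 ≤ tail a M := tsum_nonneg fun i => abs_nonneg _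

lemma summable_tail (hsum : Summable fun i => |a i|) (M : ℕ) :
    Summable fun j => |a (M + j)| := by
  have := (summable_nat_add_iff (f := fun i => |a i|) M).2 hsum
  simpa [add_comm] using this

lemma Sset_nonempty (hK : K.Nonempty) (N : ℕ) : (Sset a K N).Nonempty := by
  choose y hy using fun i => hK.pow (n := i)
  exact ⟨∑ i ∈ Finset.range N, a i • y i,
    Set.finset_sum_mem_finset_sum _ _ _ fun i _ => Set.smul_mem_smul_set (hy i)⟩

lemma Sset_abs_le (hsum : Summable fun i => |a i|) (hKsub : K ⊆ Set.Icc 0 1) (N : ℕ)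
    {x : ℝ} (hx : x ∈ Sset a K N) : |x| ≤ Atot a := by
  rw [Sset, Set.mem_finset_sum] at hx
  obtain ⟨g, hg, rfl⟩ := hx
  calc |∑ i ∈ Finset.range N, g i| ≤ ∑ i ∈ Finset.range N, |g i| :=
        Finset.abs_sum_le_sum_abs _ _
    _ ≤ ∑ i ∈ Finset.range N, |a i| := by
        refine Finset.sum_le_sum fun i hi => ?_
        obtain ⟨y, hy, hay⟩ := hg hi
        rw [← hay]
        have := abs_le_one_of_Icc (pow_subset_Icc hKsub i hy)
        calc |a i • y| = |a i| * |y| := by rw [smul_eq_mul, abs_mul]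
          _ ≤ |a i| * 1 := by nlinarith [abs_nonneg (a i)]
          _ = |a i| := mul_one _
    _ ≤ Atot a := Summable.sum_le_tsum _ (fun j _ => abs_nonneg _) hsum

lemma Sset_bounded (hsum : Summable fun i => |a i|) (hKsub : K ⊆ Set.Icc 0 1) (N : ℕ) :
    Bornology.IsBounded (Sset a K N) := by
  refine (Metric.isBounded_closedBall (x := (0:ℝ)) (r := Atot a)).subset fun x hx => ?_
  simpa [Real.dist_eq] using Sset_abs_le hsum hKsub N hx

lemma Sset_edist_ne_top (hsum : Summable fun i => |a i|) (hK : K.Nonempty)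
    (hKsub : K ⊆ Set.Icc 0 1) (N M : ℕ) :
    EMetric.hausdorffEdist (Sset a K N) (Sset a K M) ≠ ⊤ :=
  Metric.hausdorffEdist_ne_top_of_nonempty_of_bounded (Sset_nonempty hK N)
    (Sset_nonempty hK M) (Sset_bounded hsum hKsub N) (Sset_bounded hsum hKsub M)

lemma abs_le_of_mem_smul_pow (hKsub : K ⊆ Set.Icc 0 1) {i : ℕ} {x : ℝ}
    (hx : x ∈ a i • K ^ i) : |x| ≤ |a i| := by
  obtain ⟨y, hy, hay⟩ := hx
  rw [← hay]
  have := abs_le_one_of_Icc (pow_subset_Icc hKsub i hy)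
  calc |a i • y| = |a i| * |y| := by rw [smul_eq_mul, abs_mul]
    _ ≤ |a i| * 1 := by nlinarith [abs_nonneg (a i)]
    _ = |a i| := mul_one _

lemma sum_Ico_abs_le_tail (hsum : Summable fun i => |a i|) (M N : ℕ) :
    ∑ i ∈ Finset.Ico M N, |a i| ≤ tail a M := by
  rw [Finset.sum_Ico_eq_sum_range]
  exact Summable.sum_le_tsum (Finset.range (N - M)) (fun j _ => abs_nonneg _) (summable_tail hsum M)

lemma dist_partial_sum (hsum : Summable fun i => |a i|) (hKsub : K ⊆ Set.Icc 0 1)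
    {g : ℕ → ℝ} {M N : ℕ} (hMN : M ≤ N)
    (hg : ∀ i ∈ Finset.range N, g i ∈ a i • K ^ i) :
    dist (∑ i ∈ Finset.range N, g i) (∑ i ∈ Finset.range M, g i) ≤ tail a M := by
  rw [Real.dist_eq, ← Finset.sum_range_add_sum_Ico g hMN, add_sub_cancel_left]
  calc |∑ i ∈ Finset.Ico M N, g i| ≤ ∑ i ∈ Finset.Ico M N, |g i| :=
        Finset.abs_sum_le_sum_abs _ _
    _ ≤ ∑ i ∈ Finset.Ico M N, |a i| := by
        refine Finset.sum_le_sum fun i hi => ?_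
        exact abs_le_of_mem_smul_pow hKsub
          (hg i (Finset.mem_range.2 ((Finset.mem_Ico.1 hi).2)))
    _ ≤ tail a M := sum_Ico_abs_le_tail hsum M N

lemma dist_Sset (hsum : Summable fun i => |a i|) (hK : K.Nonempty) (hKsub : K ⊆ Set.Icc 0 1)
    {M N : ℕ} (hMN : M ≤ N) :
    Metric.hausdorffDist (Sset a K N) (Sset a K M) ≤ tail a M := by
  refine Metric.hausdorffDist_le_of_mem_dist (tail_nonneg M) ?_ ?_
  · rintro x hx
    rw [Sset, Set.mem_finset_sum] at hx
    obtain ⟨g, hg, rfl⟩ := hx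
    refine ⟨∑ i ∈ Finset.range M, g i,
      Set.finset_sum_mem_finset_sum _ _ _
        (fun i hi => hg (Finset.mem_range.2 ((Finset.mem_range.1 hi).trans_le hMN))), ?_⟩
    exact dist_partial_sum hsum hKsub hMN (fun i hi => hg hi)
  · rintro y hy
    rw [Sset, Set.mem_finset_sum] at hy
    obtain ⟨g, hg, rfl⟩ := hy
    have hz : ∀ i : ℕ, ∃ v, v ∈ a i • K ^ i := fun i => (hK.pow (n := i)).smul_set
    choose z hzmem using hz
    classical
    set g' : ℕ → ℝ := fun i => if i < M then g i else z i with hg'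
    have hmem : ∀ i ∈ Finset.range N, g' i ∈ a i • K ^ i := by
      intro i _
      by_cases h : i < M
      · simpa [g', h] using hg (Finset.mem_range.2 h)
      · simpa [g', h] using hzmem i
    have hsame : ∑ i ∈ Finset.range M, g' i = ∑ i ∈ Finset.range M, g i :=
      Finset.sum_congr rfl fun i hi => by simp [g', Finset.mem_range.1 hi]
    refine ⟨∑ i ∈ Finset.range N, g' i,
      Set.finset_sum_mem_finset_sum _ _ _ hmem, ?_⟩
    rw [dist_comm, ← hsame]
    exact dist_partial_sum hsum hKsub hMN hmem

lemma dist_F_Sset (hsum : Summable fun i => |a i|) (hK : K.Nonempty) (hKsub : K ⊆ Set.Icc 0 1)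
    {F : Set ℝ} (hFc : IsCompact F) (hFne : F.Nonempty)
    (hlim : Filter.Tendsto (fun n => Metric.hausdorffDist (Sset a K n) F)
      Filter.atTop (nhds 0)) (M : ℕ) :
    Metric.hausdorffDist F (Sset a K M) ≤ tail a M := by
  have hFb := hFc.isBounded
  have h1 : ∀ N, M ≤ N →
      Metric.hausdorffDist F (Sset a K M) ≤
        Metric.hausdorffDist (Sset a K N) F + tail a M := by
    intro N hMN
    have hfin : EMetric.hausdorffEdist F (Sset a K N) ≠ ⊤ :=
      Metric.hausdorffEdist_ne_top_of_nonempty_of_bounded hFne (Sset_nonempty hK N)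
        hFb (Sset_bounded hsum hKsub N)
    calc Metric.hausdorffDist F (Sset a K M)
        ≤ Metric.hausdorffDist F (Sset a K N) +
            Metric.hausdorffDist (Sset a K N) (Sset a K M) :=
          Metric.hausdorffDist_triangle hfin
      _ ≤ Metric.hausdorffDist (Sset a K N) F + tail a M := by
          rw [Metric.hausdorffDist_comm]
          exact add_le_add le_rfl (dist_Sset hsum hK hKsub hMN)
  refine ge_of_tendsto (f := fun N => Metric.hausdorffDist (Sset a K N) F + tail a M)
    (by simpa using hlim.add_const (tail a M)) ?_
  filter_upwards [Filter.eventually_ge_atTop M] with N hN using h1 N hN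

lemma exists_cutoff (hfast : Filter.Tendsto (fun i : ℕ => Real.log |a i| / (i * Real.log i))
    Filter.atTop Filter.atBot) (n : ℕ) :
    ∃ m, 3 ≤ m ∧ n ≤ m ∧ ∀ i, m ≤ i → |a i| ≤ ((i : ℝ) ^ (n ^ 2 * i))⁻¹ := by
  have h1 : ∀ᶠ i in Filter.atTop,
      Real.log |a i| / (i * Real.log i) ≤ -((n:ℝ) ^ 2) :=
    hfast.eventually_le_atBot _
  obtain ⟨m0, hm0⟩ := Filter.eventually_atTop.1 h1
  refine ⟨max (max 3 n) m0, le_trans (le_max_left 3 n) (le_max_left _ _),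
    le_trans (le_max_right 3 n) (le_max_left _ _), ?_⟩
  intro i hi
  have hi3 : 3 ≤ i := le_trans (le_trans (le_max_left 3 n) (le_max_left _ _)) hi
  have him : m0 ≤ i := le_trans (le_max_right _ _) hi
  have hipos : (0:ℝ) < i := by exact_mod_cast Nat.lt_of_lt_of_le (by norm_num) hi3
  have hlogpos : 0 < Real.log i := Real.log_pos (by exact_mod_cast Nat.lt_of_lt_of_le (by norm_num) hi3)
  have hil : 0 < (i:ℝ) * Real.log i := mul_pos hipos hlogpos
  have hppos : (0:ℝ) < ((i : ℝ) ^ (n ^ 2 * i)) := pow_pos hipos _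
  rcases eq_or_ne (a i) 0 with h0 | h0
  · rw [h0, abs_zero]; positivity
  · have habs : 0 < |a i| := abs_pos.2 h0
    have hlog : Real.log |a i| ≤ -((n:ℝ) ^ 2) * ((i:ℝ) * Real.log i) := by
      have := hm0 i him
      rw [div_le_iff₀ hil] at this
      linarith
    have hexp : |a i| ≤ Real.exp (-((n:ℝ) ^ 2) * ((i:ℝ) * Real.log i)) :=
      (Real.log_le_iff_le_exp habs).1 hlog
    refine hexp.trans (le_of_eq ?_)
    have hrw : ((i:ℝ) ^ (n ^ 2 * i))⁻¹ =
        Real.exp (Real.log (((i:ℝ) ^ (n ^ 2 * i))⁻¹)) :=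
      (Real.exp_log (by positivity)).symm
    rw [hrw, Real.log_inv, Real.log_pow]
    congr 1
    push_cast
    ring

lemma Mof_spec (hfast : Filter.Tendsto (fun i : ℕ => Real.log |a i| / (i * Real.log i))
    Filter.atTop Filter.atBot) (n : ℕ) :
    3 ≤ Mof a n ∧ n ≤ Mof a n ∧
      ∀ i, Mof a n ≤ i → |a i| ≤ ((i : ℝ) ^ (n ^ 2 * i))⁻¹ := by
  have hex := exists_cutoff hfast n
  rw [Mof, dif_pos hex]
  exact hex.choose_spec

lemma Mof_three (n : ℕ) : 3 ≤ Mof a n := by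
  by_cases h : ∃ m, 3 ≤ m ∧ n ≤ m ∧ ∀ i, m ≤ i → |a i| ≤ ((i : ℝ) ^ (n ^ 2 * i))⁻¹
  · rw [Mof, dif_pos h]; exact h.choose_spec.1
  · rw [Mof, dif_neg h]

lemma phi_pos (n : ℕ) : 0 < phi a n := by
  have h3 := Mof_three (a := a) n
  have : (0:ℝ) < Mof a n := by exact_mod_cast Nat.lt_of_lt_of_le (by norm_num) h3
  have hA := Atot_nonneg (a := a)
  rw [phi]
  positivity

lemma tail_le (hsum : Summable fun i => |a i|)
    (hfast : Filter.Tendsto (fun i : ℕ => Real.log |a i| / (i * Real.log i))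
      Filter.atTop Filter.atBot) {n : ℕ} (hn : 1 ≤ n) :
    tail a (Mof a n) ≤ 2 * ((Mof a n : ℝ) ^ (n ^ 2 * Mof a n))⁻¹ := by
  obtain ⟨h3, -, hspec⟩ := Mof_spec hfast n
  set M := Mof a n with hMdef
  have hM0 : (0:ℝ) < M := by exact_mod_cast Nat.lt_of_lt_of_le (by norm_num) h3
  have hM2 : (2:ℝ) ≤ M := by exact_mod_cast le_trans (by norm_num) h3
  set C : ℝ := ((M : ℝ) ^ (n ^ 2 * M))⁻¹ with hC
  have hC0 : 0 < C := by positivity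
  have hterm : ∀ j : ℕ, |a (M + j)| ≤ C * (1/2) ^ j := by
    intro j
    have h1 : |a (M + j)| ≤ (((M + j : ℕ) : ℝ) ^ (n ^ 2 * (M + j)))⁻¹ :=
      hspec (M + j) (Nat.le_add_right _ _)
    refine h1.trans ?_
    have hMj : (0:ℝ) < ((M + j : ℕ) : ℝ) := by positivity
    have hgrow : (M : ℝ) ^ (n ^ 2 * M) * 2 ^ j ≤ ((M + j : ℕ) : ℝ) ^ (n ^ 2 * (M + j)) := by
      have e1 : ((M + j : ℕ) : ℝ) ^ (n ^ 2 * (M + j)) ≥ (M : ℝ) ^ (n ^ 2 * (M + j)) := by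
        apply pow_le_pow_left₀ hM0.le
        exact_mod_cast Nat.le_add_right M j
      have e2 : (M : ℝ) ^ (n ^ 2 * (M + j)) = (M : ℝ) ^ (n ^ 2 * M) * (M : ℝ) ^ (n ^ 2 * j) := by
        rw [← pow_add, ← Nat.mul_add]
      have e3 : (2:ℝ) ^ j ≤ (M : ℝ) ^ (n ^ 2 * j) := by
        calc (2:ℝ) ^ j ≤ (M : ℝ) ^ j := pow_le_pow_left₀ (by norm_num) hM2 j
          _ ≤ (M : ℝ) ^ (n ^ 2 * j) := by
              apply pow_le_pow_right₀ (by linarith)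
              have : 1 ≤ n ^ 2 := Nat.one_le_pow _ _ hn
              exact Nat.le_mul_of_pos_left j (by omega)
      calc (M : ℝ) ^ (n ^ 2 * M) * 2 ^ j ≤ (M : ℝ) ^ (n ^ 2 * M) * (M : ℝ) ^ (n ^ 2 * j) := by
            apply mul_le_mul_of_nonneg_left e3 (by positivity)
        _ = (M : ℝ) ^ (n ^ 2 * (M + j)) := e2.symm
        _ ≤ ((M + j : ℕ) : ℝ) ^ (n ^ 2 * (M + j)) := e1
    have : (((M + j : ℕ) : ℝ) ^ (n ^ 2 * (M + j)))⁻¹ ≤ ((M : ℝ) ^ (n ^ 2 * M) * 2 ^ j)⁻¹ :=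
      inv_anti₀ (by positivity) hgrow
    refine this.trans (le_of_eq ?_)
    rw [hC, mul_inv, one_div, inv_pow]
  calc tail a M ≤ ∑' j : ℕ, C * (1/2) ^ j := by
        refine Summable.tsum_le_tsum hterm (summable_tail hsum M) ?_
        exact (summable_geometric_two).mul_left C
    _ = C * 2 := by rw [tsum_mul_left, tsum_geometric_two]
    _ = 2 * C := mul_comm _ _

lemma Cfin_subset_Icc {P : Finset ℝ} (hP : ↑P ⊆ Set.Icc (0:ℝ) 1) {i : ℕ} {q : ℝ}
    (hq : q ∈ Cfin P i) : q ∈ Set.Icc (0:ℝ) 1 := by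
  rw [Cfin, Finset.mem_image] at hq
  obtain ⟨e, -, rfl⟩ := hq
  constructor
  · exact Finset.prod_nonneg fun p _ => pow_nonneg (hP (Finset.mem_coe.2 p.2)).1 _
  · exact Finset.prod_le_one (fun p _ => pow_nonneg (hP (Finset.mem_coe.2 p.2)).1 _)
      (fun p _ => pow_le_one₀ (hP (Finset.mem_coe.2 p.2)).1 (hP (Finset.mem_coe.2 p.2)).2)

lemma card_Cfin (P : Finset ℝ) (i : ℕ) : (Cfin P i).card ≤ (i + 1) ^ P.card := by
  classical
  refine Finset.card_image_le.trans ?_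
  rw [Finset.card_univ]
  rw [Fintype.card_fun]
  simp

lemma cover_pow {P : Finset ℝ} (hP : ↑P ⊆ Set.Icc (0:ℝ) 1) (hKsub : K ⊆ Set.Icc 0 1)
    {ε : ℝ} (hε : 0 ≤ ε) (hnet : ∀ z ∈ K, ∃ p ∈ P, |z - p| ≤ ε) :
    ∀ i, ∀ x ∈ K ^ i, ∃ q ∈ Cfin P i, |x - q| ≤ i * ε := by
  intro i
  induction i with
  | zero =>
    intro x hx
    rw [pow_zero] at hx
    refine ⟨1, ?_, by simp [Set.mem_one.1 hx]⟩
    rw [Cfin, Finset.mem_image]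
    exact ⟨fun _ => 0, Finset.mem_univ _, by simp⟩
  | succ i ih =>
    intro x hx
    rw [pow_succ] at hx
    obtain ⟨y, hy, z, hz, rfl⟩ := hx
    obtain ⟨q, hqC, hqd⟩ := ih y hy
    obtain ⟨p, hp, hpd⟩ := hnet z hz
    classical
    refine ⟨q * p, ?_, ?_⟩
    · rw [Cfin, Finset.mem_image] at hqC ⊢
      obtain ⟨e, -, rfl⟩ := hqC
      refine ⟨Function.update (fun p' => (e p').castSucc) ⟨p, hp⟩ (e ⟨p, hp⟩).succ,
        Finset.mem_univ _, ?_⟩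
      have hfun : (fun p1 : ↑P => (p1 : ℝ) ^
          ((Function.update (fun p' => (e p').castSucc) (⟨p, hp⟩ : ↑P)
            (e ⟨p, hp⟩).succ p1 : Fin (i+2)) : ℕ)) =
          Function.update (fun p' : ↑P => (p' : ℝ) ^ ((e p' : ℕ))) ⟨p, hp⟩
            ((p : ℝ) ^ ((e ⟨p, hp⟩ : ℕ) + 1)) := by
        funext p1
        rcases eq_or_ne p1 ⟨p, hp⟩ with h | h
        · subst h; simp
        · simp [Function.update_of_ne h]
      rw [show (∏ p1 : ↑P, (p1 : ℝ) ^
          ((Function.update (fun p' => (e p').castSucc) (⟨p, hp⟩ : ↑P)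
            (e ⟨p, hp⟩).succ p1 : Fin (i+2)) : ℕ)) =
          ∏ p1 : ↑P, Function.update (fun p' : ↑P => (p' : ℝ) ^ ((e p' : ℕ))) ⟨p, hp⟩
            ((p : ℝ) ^ ((e ⟨p, hp⟩ : ℕ) + 1)) p1 from by rw [← hfun]]
      rw [Finset.prod_update_of_mem (Finset.mem_univ _)]
      rw [Finset.prod_eq_mul_prod_sdiff_singleton_of_mem (Finset.mem_univ (⟨p, hp⟩ : ↑P))
        (fun p' : ↑P => (p' : ℝ) ^ ((e p' : ℕ)))]
      rw [pow_succ]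
      ring
    · have hq01 := Cfin_subset_Icc hP hqC
      have hz01 := hKsub hz
      have habs : |y * z - q * p| ≤ |z| * |y - q| + |q| * |z - p| := by
        have hid : y * z - q * p = z * (y - q) + q * (z - p) := by ring
        rw [hid]
        refine (abs_add_le _ _).trans ?_
        rw [abs_mul, abs_mul]
      have h1 : |z| ≤ 1 := abs_le_one_of_Icc hz01
      have h2 : |q| ≤ 1 := abs_le_one_of_Icc hq01
      have h3 : 0 ≤ |y - q| := abs_nonneg _
      have h4 : 0 ≤ |z - p| := abs_nonneg _
      have h5 : |z| * |y - q| ≤ 1 * (i * ε) :=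
        mul_le_mul h1 hqd h3 zero_le_one
      have h6 : |q| * |z - p| ≤ 1 * ε := mul_le_mul h2 hpd h4 zero_le_one
      push_cast
      nlinarith

lemma Good_one_le {n : ℕ} (hg : Good a n K) : 1 ≤ n := by
  obtain ⟨P, hPne, -, hPcard, -⟩ := hg
  exact le_trans hPne.card_pos hPcard

lemma cover_F (hsum : Summable fun i => |a i|)
    (hfast : Filter.Tendsto (fun i : ℕ => Real.log |a i| / (i * Real.log i))
      Filter.atTop Filter.atBot)
    (hK : K.Nonempty) (hKsub : K ⊆ Set.Icc 0 1) {n : ℕ} (hg : Good a n K)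
    {F : Set ℝ}
    (hF : ∀ x ∈ F, Metric.infDist x (Sset a K (Mof a n)) ≤ tail a (Mof a n)) :
    ∃ D : Finset ℝ, D.card ≤ (Mof a n) ^ (n * Mof a n) ∧
      ∀ x ∈ F, ∃ c ∈ D, dist x c ≤ 4 * ((Mof a n : ℝ) ^ (n ^ 2 * Mof a n))⁻¹ := by
  classical
  have hn1 : 1 ≤ n := Good_one_le hg
  obtain ⟨P, hPne, hPsub, hPcard, hPd⟩ := hg
  obtain ⟨hM3, hMn, hMspec⟩ := Mof_spec hfast n
  set M := Mof a n with hMdef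
  have hM0 : (0:ℝ) < M := by exact_mod_cast Nat.lt_of_lt_of_le (by norm_num) hM3
  have hM1 : (1:ℝ) ≤ M := by exact_mod_cast le_trans (by norm_num) hM3
  set κ : ℝ := ((M : ℝ) ^ (n ^ 2 * M))⁻¹ with hκ
  have hκpos : 0 < κ := by positivity
  have hKbdd : Bornology.IsBounded K := (Metric.isBounded_Icc (0:ℝ) 1).subset hKsub
  have hPne' : (↑P : Set ℝ).Nonempty := Finset.coe_nonempty.2 hPne
  have hfinKP : EMetric.hausdorffEdist K (↑P : Set ℝ) ≠ ⊤ :=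
    Metric.hausdorffEdist_ne_top_of_nonempty_of_bounded hK hPne' hKbdd
      P.finite_toSet.isBounded
  have hnet : ∀ z ∈ K, ∃ p ∈ P, |z - p| ≤ phi a n := by
    intro z hz
    have h1 : Metric.infDist z (↑P : Set ℝ) ≤ phi a n :=
      (Metric.infDist_le_hausdorffDist_of_mem hz hfinKP).trans hPd
    obtain ⟨p, hp, hpd⟩ := P.finite_toSet.isCompact.exists_infDist_eq_dist hPne' z
    exact ⟨p, Finset.mem_coe.1 hp, by rw [← Real.dist_eq, ← hpd]; exact h1⟩
  have hφ0 : (0:ℝ) ≤ phi a n := (phi_pos n).le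
  have hcov := cover_pow hPsub hKsub hφ0 hnet
  set D : Finset ℝ := Finset.image
      (fun gq : (j : Fin M) → ↥(Cfin P (j:ℕ)) => ∑ j : Fin M, a (j:ℕ) * ((gq j : ℝ)))
      Finset.univ with hD
  refine ⟨D, ?_, ?_⟩
  · refine Finset.card_image_le.trans ?_
    rw [Finset.card_univ, Fintype.card_pi]
    calc (∏ j : Fin M, Fintype.card ↥(Cfin P (j:ℕ)))
        ≤ ∏ _j : Fin M, M ^ n := by
          refine Finset.prod_le_prod' ?_
          intro j _
          rw [Fintype.card_coe]
          refine (card_Cfin P (j:ℕ)).trans ?_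
          calc ((j:ℕ) + 1) ^ P.card ≤ ((j:ℕ) + 1) ^ n :=
              Nat.pow_le_pow_right (Nat.succ_le_succ (Nat.zero_le _)) hPcard
            _ ≤ M ^ n := Nat.pow_le_pow_left (Nat.succ_le_of_lt j.2) n
      _ = M ^ (n * M) := by
          rw [Finset.prod_const, Finset.card_univ, Fintype.card_fin, ← pow_mul]
  · intro x hx
    have hSne : (Sset a K M).Nonempty := Sset_nonempty hK M
    obtain ⟨s, hs, hxs⟩ := (Metric.infDist_lt_iff hSne).1
      ((hF x hx).trans_lt (lt_add_of_pos_right _ hκpos))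
    rw [Sset, Set.mem_finset_sum] at hs
    obtain ⟨g, hgmem, hgsum⟩ := hs
    have hch : ∀ i : ℕ, ∃ yq : ℝ × ℝ, i ∈ Finset.range M →
        (g i = a i * yq.1 ∧ yq.1 ∈ K ^ i ∧ yq.2 ∈ Cfin P i ∧
          |yq.1 - yq.2| ≤ i * phi a n) := by
      intro i
      by_cases hi : i ∈ Finset.range M
      · obtain ⟨y, hy, hay⟩ := hgmem hi
        obtain ⟨q, hqC, hqd⟩ := hcov i y hy
        exact ⟨(y, q), fun _ => ⟨by rw [← hay]; simp [smul_eq_mul], hy, hqC, hqd⟩⟩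
      · exact ⟨(0, 0), fun h => absurd h hi⟩
    choose w hw using hch
    refine ⟨∑ j : Fin M, a (j:ℕ) * (w (j:ℕ)).2, Finset.mem_image.2
      ⟨fun j => ⟨(w (j:ℕ)).2, (hw (j:ℕ) (Finset.mem_range.2 j.2)).2.2.1⟩,
        Finset.mem_univ _, rfl⟩, ?_⟩
    have hsc : dist s (∑ j : Fin M, a (j:ℕ) * (w (j:ℕ)).2) ≤ phi a n * (M * Atot a) := by
      rw [Fin.sum_univ_eq_sum_range (fun i => a i * (w i).2) M, ← hgsum, Real.dist_eq,
        ← Finset.sum_sub_distrib]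
      calc |∑ i ∈ Finset.range M, (g i - a i * (w i).2)|
          ≤ ∑ i ∈ Finset.range M, |g i - a i * (w i).2| := Finset.abs_sum_le_sum_abs _ _
        _ ≤ ∑ i ∈ Finset.range M, |a i| * (M * phi a n) := by
            refine Finset.sum_le_sum fun i hi => ?_
            obtain ⟨heq, hyK, hqC, hqd⟩ := hw i hi
            rw [heq, ← mul_sub, abs_mul]
            refine mul_le_mul_of_nonneg_left (hqd.trans ?_) (abs_nonneg _)
            refine mul_le_mul_of_nonneg_right ?_ hφ0
            exact_mod_cast (Finset.mem_range.1 hi).le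
        _ = (∑ i ∈ Finset.range M, |a i|) * (M * phi a n) := (Finset.sum_mul _ _ _).symm
        _ ≤ Atot a * (M * phi a n) := by
            refine mul_le_mul_of_nonneg_right ?_ (by positivity)
            exact Summable.sum_le_tsum _ (fun _ _ => abs_nonneg _) hsum
        _ = phi a n * (M * Atot a) := by ring
    have hφA : phi a n * (M * Atot a) ≤ κ := by
      have hA := Atot_nonneg (a := a)
      have h1 : ((M:ℝ) ^ (n^2*M)) * M ≤ (M:ℝ) ^ ((n^2+3)*M) := by
        have e1 : (M:ℝ) ^ ((n^2+3)*M) = (M:ℝ)^(n^2*M) * (M:ℝ)^(3*M) := by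
          rw [← pow_add]; congr 1; ring
        rw [e1]
        apply mul_le_mul_of_nonneg_left _ (by positivity)
        calc (M:ℝ) = (M:ℝ)^1 := (pow_one _).symm
          _ ≤ (M:ℝ)^(3*M) := pow_le_pow_right₀ hM1 (by omega)
      have h2 : ((M:ℝ) ^ ((n^2+3)*M))⁻¹ ≤ (((M:ℝ)^(n^2*M)) * M)⁻¹ :=
        inv_anti₀ (by positivity) h1
      have h3 : (((M:ℝ)^(n^2*M)) * M)⁻¹ * (M * Atot a) = ((M:ℝ)^(n^2*M))⁻¹ * Atot a := by
        rw [mul_inv]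
        field_simp
      rw [phi, hκ, div_mul_eq_mul_div, div_le_iff₀ (by linarith)]
      calc ((M:ℝ) ^ ((n^2+3)*M))⁻¹ * (M * Atot a)
          ≤ (((M:ℝ)^(n^2*M)) * M)⁻¹ * (M * Atot a) :=
            mul_le_mul_of_nonneg_right h2 (by positivity)
        _ = ((M:ℝ)^(n^2*M))⁻¹ * Atot a := h3
        _ ≤ ((M:ℝ)^(n^2*M))⁻¹ * (Atot a + 1) :=
            mul_le_mul_of_nonneg_left (by linarith) (by positivity)
    have htail : tail a M ≤ 2 * κ := tail_le hsum hfast hn1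
    calc dist x (∑ j : Fin M, a (j:ℕ) * (w (j:ℕ)).2)
        ≤ dist x s + dist s (∑ j : Fin M, a (j:ℕ) * (w (j:ℕ)).2) := dist_triangle _ _ _
      _ ≤ (tail a M + κ) + (phi a n * (M * Atot a)) := add_le_add hxs.le hsc
      _ ≤ (2*κ + κ) + κ := add_le_add (add_le_add htail le_rfl) hφA
      _ = 4 * κ := by ring

lemma count_bound {n M : ℕ} (hn1 : 1 ≤ n) (hM3 : 3 ≤ M) {d : ℝ}
    (hd0 : 0 < d) (hd1 : d ≤ 1) (hnd : 2 ≤ (n : ℝ) * d) :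
    ((M ^ (n * M) : ℕ) : ℝ) * (8 * ((M:ℝ) ^ (n ^ 2 * M))⁻¹) ^ d ≤ 8 * ((M:ℝ) ^ M)⁻¹ := by
  have hM0 : (0:ℝ) < M := by exact_mod_cast Nat.lt_of_lt_of_le (by norm_num) hM3
  have hM1 : (1:ℝ) ≤ M := by exact_mod_cast le_trans (by norm_num) hM3
  have hX0 : (0:ℝ) < (M:ℝ) ^ (n ^ 2 * M) := by positivity
  have e1 : (8 * ((M:ℝ) ^ (n ^ 2 * M))⁻¹) ^ d
      = 8 ^ d * (((M:ℝ) ^ (n ^ 2 * M)) ^ d)⁻¹ := by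
    rw [Real.mul_rpow (by norm_num) (by positivity), Real.inv_rpow hX0.le]
  have e2 : (8:ℝ) ^ d ≤ 8 := by
    calc (8:ℝ) ^ d ≤ 8 ^ (1:ℝ) := Real.rpow_le_rpow_of_exponent_le (by norm_num) hd1
      _ = 8 := Real.rpow_one 8
  have e3 : (M:ℝ) ^ ((n + 1) * M) ≤ ((M:ℝ) ^ (n ^ 2 * M)) ^ d := by
    have h1 : ((M:ℝ) ^ (n ^ 2 * M)) ^ d = (M:ℝ) ^ (((n ^ 2 * M : ℕ) : ℝ) * d) := by
      rw [← Real.rpow_natCast (M:ℝ) (n ^ 2 * M), ← Real.rpow_mul hM0.le]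
    have h2 : (((n + 1) * M : ℕ) : ℝ) ≤ ((n ^ 2 * M : ℕ) : ℝ) * d := by
      push_cast
      have hn0 : (1:ℝ) ≤ (n:ℝ) := by exact_mod_cast hn1
      have k1 : (n:ℝ) + 1 ≤ (n:ℝ)^2 * d := by
        nlinarith [mul_le_mul_of_nonneg_left hnd (by linarith : (0:ℝ) ≤ (n:ℝ))]
      nlinarith [mul_le_mul_of_nonneg_right k1 hM0.le]
    calc (M:ℝ) ^ ((n + 1) * M) = (M:ℝ) ^ ((((n + 1) * M : ℕ)) : ℝ) := by
          rw [Real.rpow_natCast]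
      _ ≤ (M:ℝ) ^ (((n ^ 2 * M : ℕ) : ℝ) * d) :=
          Real.rpow_le_rpow_of_exponent_le hM1 h2
      _ = ((M:ℝ) ^ (n ^ 2 * M)) ^ d := h1.symm
  have e4 : (((M:ℝ) ^ (n ^ 2 * M)) ^ d)⁻¹ ≤ ((M:ℝ) ^ ((n + 1) * M))⁻¹ :=
    inv_anti₀ (by positivity) e3
  calc ((M ^ (n * M) : ℕ) : ℝ) * (8 * ((M:ℝ) ^ (n ^ 2 * M))⁻¹) ^ d
      = ((M:ℝ) ^ (n * M)) * (8 ^ d * (((M:ℝ) ^ (n ^ 2 * M)) ^ d)⁻¹) := by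
        rw [e1]; push_cast; ring
    _ ≤ ((M:ℝ) ^ (n * M)) * (8 * ((M:ℝ) ^ ((n + 1) * M))⁻¹) := by
        refine mul_le_mul_of_nonneg_left ?_ (by positivity)
        refine mul_le_mul e2 e4 (by positivity) (by norm_num)
    _ = 8 * ((M:ℝ) ^ M)⁻¹ := by
        have : (M:ℝ) ^ ((n + 1) * M) = (M:ℝ) ^ (n * M) * (M:ℝ) ^ M := by
          rw [← pow_add]; congr 1; ring
        rw [this, mul_inv]
        field_simp

lemma dimH_F_zero (hsum : Summable fun i => |a i|)
    (hfast : Filter.Tendsto (fun i : ℕ => Real.log |a i| / (i * Real.log i))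
      Filter.atTop Filter.atBot)
    (hK : K.Nonempty) (hKsub : K ⊆ Set.Icc 0 1)
    (hgood : ∀ m : ℕ, ∃ n, m ≤ n ∧ Good a n K)
    {F : Set ℝ} (hFc : IsCompact F) (hFne : F.Nonempty)
    (hlim : Filter.Tendsto (fun N => Metric.hausdorffDist (Sset a K N) F)
      Filter.atTop (nhds 0)) :
    dimH F = 0 := by
  classical
  have hFd : ∀ M : ℕ, ∀ x ∈ F, Metric.infDist x (Sset a K M) ≤ tail a M := by
    intro M x hx
    have hfin : EMetric.hausdorffEdist F (Sset a K M) ≠ ⊤ :=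
      Metric.hausdorffEdist_ne_top_of_nonempty_of_bounded hFne (Sset_nonempty hK M)
        hFc.isBounded (Sset_bounded hsum hKsub M)
    exact (Metric.infDist_le_hausdorffDist_of_mem hx hfin).trans
      (dist_F_Sset hsum hK hKsub hFc hFne hlim M)
  obtain ⟨u, humono, hugood⟩ := Filter.extraction_of_frequently_atTop
    (Filter.frequently_atTop.2 (fun m => (hgood m).imp (fun n h => ⟨h.1, h.2⟩)))
  have hcov := fun j => cover_F hsum hfast hK hKsub (hugood j) (hFd (Mof a (u j)))
  choose D hDcard hDcov using hcov
  set R : ℕ → ℝ := fun j => 4 * ((Mof a (u j) : ℝ) ^ ((u j) ^ 2 * Mof a (u j)))⁻¹ with hR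
  have hn1 : ∀ j, 1 ≤ u j := fun j => Good_one_le (hugood j)
  have hM3 : ∀ j, 3 ≤ Mof a (u j) := fun j => Mof_three _
  have hMuj : ∀ j, u j ≤ Mof a (u j) := fun j => (Mof_spec hfast (u j)).2.1
  have hju : ∀ j, j ≤ u j := fun j => humono.le_apply
  have hM0 : ∀ j, (0:ℝ) < (Mof a (u j) : ℝ) :=
    fun j => by exact_mod_cast Nat.lt_of_lt_of_le (by norm_num) (hM3 j)
  have hM1 : ∀ j, (1:ℝ) ≤ (Mof a (u j) : ℝ) :=
    fun j => by exact_mod_cast le_trans (by norm_num) (hM3 j)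
  have hRpos : ∀ j, 0 < R j := fun j => by
    have := hM0 j; rw [hR]; positivity
  have hjM : ∀ j : ℕ, (j : ℝ) ≤ (Mof a (u j) : ℝ) ^ ((u j) ^ 2 * Mof a (u j)) := by
    intro j
    calc (j:ℝ) ≤ (Mof a (u j) : ℝ) := by exact_mod_cast (hju j).trans (hMuj j)
      _ = (Mof a (u j) : ℝ) ^ 1 := (pow_one _).symm
      _ ≤ (Mof a (u j) : ℝ) ^ ((u j) ^ 2 * Mof a (u j)) := by
          apply pow_le_pow_right₀ (hM1 j)
          have h1 : 1 ≤ (u j) ^ 2 := Nat.one_le_pow _ _ (hn1 j)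
          have h2 : 1 ≤ Mof a (u j) := le_trans (by norm_num) (hM3 j)
          exact Nat.one_le_iff_ne_zero.2 (by positivity)
  have hRle : ∀ j, 1 ≤ j → R j ≤ 4 * (j:ℝ)⁻¹ := by
    intro j hj
    have hjpos : (0:ℝ) < j := by exact_mod_cast hj
    rw [hR]
    exact mul_le_mul_of_nonneg_left (inv_anti₀ hjpos (hjM j)) (by norm_num)
  have hRlim : Filter.Tendsto R Filter.atTop (nhds 0) := by
    refine squeeze_zero' (g := fun j : ℕ => 4 * (j:ℝ)⁻¹) ?_ ?_ ?_
    · filter_upwards with j using (hRpos j).le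
    · filter_upwards [Filter.eventually_ge_atTop 1] with j hj using hRle j hj
    · simpa [div_eq_mul_inv] using tendsto_const_div_atTop_nhds_zero_nat 4
  have hmeas : ∀ d : ℝ≥0, 0 < d → d ≤ 1 → μH[(d:ℝ)] F = 0 := by
    intro d hd0 hd1
    have hd0' : (0:ℝ) < (d:ℝ) := hd0
    have hd1' : ((d:ℝ≥0):ℝ) ≤ 1 := hd1
    have hle := MeasureTheory.Measure.hausdorffMeasure_le_liminf_tsum (d:ℝ) F
      (l := Filter.atTop) (fun j => ENNReal.ofReal (2 * R j))
      (by
        have h2R : Filter.Tendsto (fun j => 2 * R j) Filter.atTop (nhds 0) := by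
          simpa using hRlim.const_mul 2
        simpa using ENNReal.tendsto_ofReal h2R)
      (fun j (c : ↥(D j)) => EMetric.closedBall (c : ℝ) (ENNReal.ofReal (R j)))
      (by
        filter_upwards with j
        intro c
        calc EMetric.diam (EMetric.closedBall (c : ℝ) (ENNReal.ofReal (R j)))
            ≤ 2 * ENNReal.ofReal (R j) := EMetric.diam_closedBall
          _ = ENNReal.ofReal (2 * R j) := by
              rw [ENNReal.ofReal_mul (by norm_num : (0:ℝ) ≤ 2), ENNReal.ofReal_ofNat])
      (by
        filter_upwards with j
        intro x hx
        obtain ⟨c, hcD, hcd⟩ := hDcov j x hx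
        exact Set.mem_iUnion.2 ⟨⟨c, hcD⟩, EMetric.mem_closedBall.2
          (by rw [edist_dist]; exact ENNReal.ofReal_le_ofReal hcd)⟩)
    have hb : ∀ᶠ j in Filter.atTop,
        (∑' (c : ↥(D j)),
          EMetric.diam (EMetric.closedBall (c : ℝ) (ENNReal.ofReal (R j))) ^ (d:ℝ))
          ≤ ENNReal.ofReal (8 * (j:ℝ)⁻¹) := by
      filter_upwards [Filter.eventually_ge_atTop (max 1 ⌈(2:ℝ)/(d:ℝ)⌉₊)] with j hj
      have hj1 : 1 ≤ j := le_trans (le_max_left _ _) hj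
      have hjpos : (0:ℝ) < j := by exact_mod_cast hj1
      have hjd : 2 ≤ ((u j : ℕ) : ℝ) * (d:ℝ) := by
        have h2 : (2:ℝ)/(d:ℝ) ≤ (⌈(2:ℝ)/(d:ℝ)⌉₊ : ℝ) := Nat.le_ceil _
        have h3 : (⌈(2:ℝ)/(d:ℝ)⌉₊ : ℝ) ≤ (j:ℝ) := by
          exact_mod_cast le_trans (le_max_right _ _) hj
        have h4 : (j:ℝ) ≤ (u j : ℝ) := by exact_mod_cast hju j
        have h5 : (2:ℝ)/(d:ℝ) ≤ (u j : ℝ) := by linarith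
        rw [div_le_iff₀ hd0'] at h5
        linarith
      have hterm : ∀ c : ↥(D j),
          EMetric.diam (EMetric.closedBall (c : ℝ) (ENNReal.ofReal (R j))) ^ (d:ℝ)
            ≤ ENNReal.ofReal ((2 * R j) ^ (d:ℝ)) := by
        intro c
        have h1 : EMetric.diam (EMetric.closedBall (c : ℝ) (ENNReal.ofReal (R j)))
            ≤ ENNReal.ofReal (2 * R j) := by
          calc EMetric.diam (EMetric.closedBall (c : ℝ) (ENNReal.ofReal (R j)))
              ≤ 2 * ENNReal.ofReal (R j) := EMetric.diam_closedBall
            _ = ENNReal.ofReal (2 * R j) := by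
                rw [ENNReal.ofReal_mul (by norm_num : (0:ℝ) ≤ 2), ENNReal.ofReal_ofNat]
        calc EMetric.diam (EMetric.closedBall (c : ℝ) (ENNReal.ofReal (R j))) ^ (d:ℝ)
            ≤ (ENNReal.ofReal (2 * R j)) ^ (d:ℝ) := ENNReal.rpow_le_rpow h1 hd0'.le
          _ = ENNReal.ofReal ((2 * R j) ^ (d:ℝ)) :=
              ENNReal.ofReal_rpow_of_pos (by have := hRpos j; positivity)
      calc (∑' (c : ↥(D j)),
          EMetric.diam (EMetric.closedBall (c : ℝ) (ENNReal.ofReal (R j))) ^ (d:ℝ))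
          ≤ ∑' (_c : ↥(D j)), ENNReal.ofReal ((2 * R j) ^ (d:ℝ)) :=
            ENNReal.tsum_le_tsum hterm
        _ = (Fintype.card ↥(D j)) • ENNReal.ofReal ((2 * R j) ^ (d:ℝ)) := by
            rw [tsum_fintype]
            rw [Finset.sum_const, Finset.card_univ]
        _ = ((D j).card : ℝ≥0∞) * ENNReal.ofReal ((2 * R j) ^ (d:ℝ)) := by
            rw [Fintype.card_coe, nsmul_eq_mul]
        _ = ENNReal.ofReal (((D j).card : ℝ) * (2 * R j) ^ (d:ℝ)) := by
            rw [ENNReal.ofReal_mul (by positivity), ENNReal.ofReal_natCast]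
        _ ≤ ENNReal.ofReal (8 * (j:ℝ)⁻¹) := by
            apply ENNReal.ofReal_le_ofReal
            have hcard : ((D j).card : ℝ) ≤ ((Mof a (u j) ^ ((u j) * Mof a (u j)) : ℕ) : ℝ) := by
              exact_mod_cast hDcard j
            have h2R : 2 * R j = 8 * ((Mof a (u j) : ℝ) ^ ((u j) ^ 2 * Mof a (u j)))⁻¹ := by
              rw [hR]; ring
            calc ((D j).card : ℝ) * (2 * R j) ^ (d:ℝ)
                ≤ ((Mof a (u j) ^ ((u j) * Mof a (u j)) : ℕ) : ℝ) * (2 * R j) ^ (d:ℝ) := by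
                  refine mul_le_mul_of_nonneg_right hcard ?_
                  positivity
              _ = ((Mof a (u j) ^ ((u j) * Mof a (u j)) : ℕ) : ℝ) *
                  (8 * ((Mof a (u j) : ℝ) ^ ((u j) ^ 2 * Mof a (u j)))⁻¹) ^ (d:ℝ) := by
                  rw [h2R]
              _ ≤ 8 * ((Mof a (u j) : ℝ) ^ (Mof a (u j)))⁻¹ :=
                  count_bound (hn1 j) (hM3 j) hd0' hd1' hjd
              _ ≤ 8 * (j:ℝ)⁻¹ := by
                  refine mul_le_mul_of_nonneg_left (inv_anti₀ hjpos ?_) (by norm_num)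
                  calc (j:ℝ) ≤ (Mof a (u j) : ℝ) := by
                        exact_mod_cast (hju j).trans (hMuj j)
                    _ = (Mof a (u j) : ℝ) ^ 1 := (pow_one _).symm
                    _ ≤ (Mof a (u j) : ℝ) ^ (Mof a (u j)) :=
                        pow_le_pow_right₀ (hM1 j) (le_trans (by norm_num) (hM3 j))
    refine le_zero_iff.1 ?_
    calc μH[(d:ℝ)] F
        ≤ Filter.liminf (fun j => ∑' (c : ↥(D j)),
            EMetric.diam (EMetric.closedBall (c : ℝ) (ENNReal.ofReal (R j))) ^ (d:ℝ))
            Filter.atTop := hle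
      _ ≤ Filter.liminf (fun j : ℕ => ENNReal.ofReal (8 * (j:ℝ)⁻¹)) Filter.atTop :=
          Filter.liminf_le_liminf hb
      _ = 0 := by
          have h8 : Filter.Tendsto (fun j : ℕ => 8 * (j:ℝ)⁻¹) Filter.atTop (nhds 0) := by
            simpa [div_eq_mul_inv] using tendsto_const_div_atTop_nhds_zero_nat 8
          have h9 := ENNReal.tendsto_ofReal h8
          rw [ENNReal.ofReal_zero] at h9
          exact h9.liminf_eq
  have hdim : ∀ d : ℝ≥0, 0 < d → d ≤ 1 → dimH F ≤ (d : ℝ≥0∞) := fun d h1 h2 =>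
    dimH_le_of_hausdorffMeasure_ne_top (by rw [hmeas d h1 h2]; exact ENNReal.zero_ne_top)
  refine le_antisymm ?_ zero_le
  refine ENNReal.le_of_forall_pos_le_add fun ε hε _ => ?_
  rw [zero_add]
  calc dimH F ≤ ((min ε 1 : ℝ≥0) : ℝ≥0∞) := hdim _ (lt_min hε one_pos) (min_le_right _ _)
    _ ≤ (ε : ℝ≥0∞) := by exact_mod_cast min_le_left ε 1

end Lemmas

section Assembly

variable (a : ℕ → ℝ)

noncomputable def PtoNC (P : Finset ℝ) (h : P.Nonempty) : TopologicalSpace.NonemptyCompacts ℝ :=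
  ⟨⟨(↑P : Set ℝ), P.finite_toSet.isCompact⟩, Finset.coe_nonempty.2 h⟩

def Gset (m : ℕ) : Set (TopologicalSpace.NonemptyCompacts ℝ) :=
  ⋃ (n : ℕ) (_ : m ≤ n) (P : Finset ℝ) (h : P.Nonempty)
    (_ : (↑P : Set ℝ) ⊆ Set.Icc (0:ℝ) 1) (_ : P.card ≤ n),
    Metric.ball (PtoNC P h) (phi a n)

lemma isOpen_Gset (m : ℕ) : IsOpen (Gset a m) :=
  isOpen_iUnion fun _ => isOpen_iUnion fun _ => isOpen_iUnion fun _ =>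
    isOpen_iUnion fun _ => isOpen_iUnion fun _ => isOpen_iUnion fun _ => Metric.isOpen_ball

lemma mem_Gset_iff {m : ℕ} {X : TopologicalSpace.NonemptyCompacts ℝ} :
    X ∈ Gset a m ↔ ∃ n, m ≤ n ∧ ∃ P : Finset ℝ, P.Nonempty ∧
      (↑P : Set ℝ) ⊆ Set.Icc (0:ℝ) 1 ∧ P.card ≤ n ∧
      Metric.hausdorffDist (X : Set ℝ) ↑P < phi a n := by
  simp only [Gset, Set.mem_iUnion, Metric.mem_ball]
  constructor
  · rintro ⟨n, hn, P, h, hsub, hcard, hd⟩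
    exact ⟨n, hn, P, h, hsub, hcard,
      by rwa [Metric.NonemptyCompacts.dist_eq] at hd⟩
  · rintro ⟨n, hn, P, h, hsub, hcard, hd⟩
    exact ⟨n, hn, P, h, hsub, hcard,
      by rwa [Metric.NonemptyCompacts.dist_eq]⟩

end Assembly

end MeagerDim

theorem meager_positive_dimension (a : ℕ → ℝ) (hsum : Summable (fun i => |a i|))
    (hfast : Filter.Tendsto (fun i : ℕ => Real.log |a i| / (i * Real.log i))
      Filter.atTop Filter.atBot) :
    IsMeagre {K : KIcc |
      ∃ F : Set ℝ, IsCompact F ∧ F.Nonempty ∧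
        Filter.Tendsto
          (fun n => Metric.hausdorffDist
            (∑ i ∈ Finset.range n, a i • ((K.1 : Set ℝ) ^ i)) F)
          Filter.atTop (nhds 0) ∧
        0 < dimH F} := by
  classical
  set G : ℕ → Set KIcc := fun m => Subtype.val ⁻¹' (MeagerDim.Gset a m) with hG
  have hGopen : ∀ m, IsOpen (G m) :=
    fun m => (MeagerDim.isOpen_Gset a m).preimage continuous_subtype_val
  have hGdense : ∀ m, Dense (G m) := by
    intro m
    rw [dense_iff_inter_open]
    rintro U hU ⟨K, hKU⟩
    obtain ⟨V, hV, rfl⟩ := isOpen_induced_iff.1 hU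
    obtain ⟨ε, hε, hball⟩ := Metric.isOpen_iff.1 hV K.1 hKU
    obtain ⟨t, hts, htf, htcov⟩ := K.1.isCompact.finite_cover_balls (half_pos hε)
    obtain ⟨x0, hx0⟩ := K.1.nonempty
    obtain ⟨y0, hy0t, -⟩ := Set.mem_iUnion₂.1 (htcov hx0)
    set P : Finset ℝ := htf.toFinset with hP
    have hPne : P.Nonempty := ⟨y0, htf.mem_toFinset.2 hy0t⟩
    have hPsub' : (↑P : Set ℝ) ⊆ (K.1 : Set ℝ) := by
      rw [hP, Set.Finite.coe_toFinset]; exact hts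
    have hPsub : (↑P : Set ℝ) ⊆ Set.Icc (0:ℝ) 1 := hPsub'.trans K.2
    have hdH : Metric.hausdorffDist (↑P : Set ℝ) (K.1 : Set ℝ) ≤ ε / 2 := by
      refine Metric.hausdorffDist_le_of_mem_dist (half_pos hε).le ?_ ?_
      · intro p hp
        exact ⟨p, hPsub' hp, by simp; positivity⟩
      · intro x hx
        obtain ⟨y, hyt, hxy⟩ := Set.mem_iUnion₂.1 (htcov hx)
        exact ⟨y, Finset.mem_coe.2 (htf.mem_toFinset.2 hyt), (Metric.mem_ball.1 hxy).le⟩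
    set K' : KIcc := ⟨MeagerDim.PtoNC P hPne, hPsub⟩ with hK'
    refine ⟨K', ⟨?_, ?_⟩⟩
    · apply hball
      rw [Metric.mem_ball, Metric.NonemptyCompacts.dist_eq]
      exact lt_of_le_of_lt hdH (by linarith)
    · show K'.1 ∈ MeagerDim.Gset a m
      rw [MeagerDim.mem_Gset_iff]
      refine ⟨max m P.card, le_max_left _ _, P, hPne, hPsub, le_max_right _ _, ?_⟩
      have : Metric.hausdorffDist ((K'.1 : Set ℝ)) (↑P : Set ℝ) = 0 := by
        show Metric.hausdorffDist (↑P : Set ℝ) (↑P : Set ℝ) = 0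
        exact Metric.hausdorffDist_self_zero
      rw [this]
      exact MeagerDim.phi_pos _
  have hres : (⋂ m, G m) ∈ residual KIcc :=
    countable_iInter_mem.2 fun m => residual_of_dense_open (hGopen m) (hGdense m)
  refine Filter.mem_of_superset hres ?_
  intro K hKmem
  simp only [Set.mem_compl_iff, Set.mem_setOf_eq]
  rintro ⟨F, hFc, hFne, hlim, hdim⟩
  have hgood : ∀ m : ℕ, ∃ n, m ≤ n ∧ MeagerDim.Good a n (K.1 : Set ℝ) := by
    intro m
    have hm := Set.mem_iInter.1 hKmem m
    obtain ⟨n, hn, P, h1, h2, h3, h4⟩ := (MeagerDim.mem_Gset_iff a).1 hm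
    exact ⟨n, hn, P, h1, h2, h3, h4.le⟩
  have hzero := MeagerDim.dimH_F_zero hsum hfast K.1.nonempty K.2 hgood hFc hFne hlim
  rw [hzero] at hdim
  exact lt_irrefl _ hdim
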